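/- Let T ∈ U ⊗ V ⊗ W with a blocking D indexed by I × J × K, and let Ψ ⊆ supp_D T be a combinatorial degeneration of supp_D T. Then the tensor Σ_{(i,j,k) ∈ Ψ} T_{(i,j,k)} is a degeneration of T, i.e., it lies in the closure of the GL(U)×GL(V)×GL(W)-orbit of T. (Proof idea: act by diagonal matrices scaling the block U_i by t^{α(i)}, V_j by t^{β(j)}, W_k by t^{γ(k)} and take t → 0.) -/

import Mathlib

/-- Combinatorial degenerations give tensor degenerations. We work in coordinates:
`T : a × b × c → ℂ` is a tensor written in bases adapted to a blocking, the basis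
vectors of the three spaces being labeled by `p : a → I`, `q : b → J`, `r : c → K`
(so that `U_i` is spanned by the basis vectors `x` with `p x = i`, etc.). The block
`T_{(i,j,k)}` is the restriction of `T` to the indices with labels `(i,j,k)`, and
`supp_D T` is the set of `(i,j,k)` where this block is nonzero. If `Ψ ⊆ supp_D T` is
a combinatorial degeneration (witnessed by `α, β, γ`), then `Σ_{(i,j,k)∈Ψ} T_{(i,j,k)}`
lies in the closure of the `GL(U)×GL(V)×GL(W)`-orbit of `T`. -/
theorem stmt18
    {a b c I J K : Type*}
    [Fintype a] [Fintype b] [Fintype c]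
    [DecidableEq a] [DecidableEq b] [DecidableEq c]
    [DecidableEq I] [DecidableEq J] [DecidableEq K]
    (p : a → I) (q : b → J) (r : c → K)
    (T : a × b × c → ℂ)
    (Ψ : Set (I × J × K)) [DecidablePred (· ∈ Ψ)]
    (hΨsupp : Ψ ⊆ {ijk : I × J × K | ∃ x y z,
      p x = ijk.1 ∧ q y = ijk.2.1 ∧ r z = ijk.2.2 ∧ T (x, y, z) ≠ 0})
    (α : I → ℤ) (β : J → ℤ) (γ : K → ℤ)
    (hzero : ∀ ijk ∈ Ψ, α ijk.1 + β ijk.2.1 + γ ijk.2.2 = 0)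
    (hpos : ∀ ijk : I × J × K,
      ijk ∈ {ijk : I × J × K | ∃ x y z,
        p x = ijk.1 ∧ q y = ijk.2.1 ∧ r z = ijk.2.2 ∧ T (x, y, z) ≠ 0} →
      ijk ∉ Ψ → 0 < α ijk.1 + β ijk.2.1 + γ ijk.2.2) :
    (fun xyz : a × b × c =>
        if (p xyz.1, q xyz.2.1, r xyz.2.2) ∈ Ψ then T xyz else 0) ∈
      closure {S : a × b × c → ℂ |
        ∃ g₁ : Matrix a a ℂ, ∃ g₂ : Matrix b b ℂ, ∃ g₃ : Matrix c c ℂ,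
          IsUnit g₁.det ∧ IsUnit g₂.det ∧ IsUnit g₃.det ∧
          S = fun xyz => ∑ x : a, ∑ y : b, ∑ z : c,
            g₁ xyz.1 x * g₂ xyz.2.1 y * g₃ xyz.2.2 z * T (x, y, z)} := by
  have key : ∀ n : ℕ, (fun xyz : a × b × c =>
      ((1/(n+1:ℝ) : ℂ)) ^ (α (p xyz.1) + β (q xyz.2.1) + γ (r xyz.2.2)) * T xyz) ∈
      {S : a × b × c → ℂ |
        ∃ g₁ : Matrix a a ℂ, ∃ g₂ : Matrix b b ℂ, ∃ g₃ : Matrix c c ℂ,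
          IsUnit g₁.det ∧ IsUnit g₂.det ∧ IsUnit g₃.det ∧
          S = fun xyz => ∑ x : a, ∑ y : b, ∑ z : c,
            g₁ xyz.1 x * g₂ xyz.2.1 y * g₃ xyz.2.2 z * T (x, y, z)} := by
    intro n
    set t : ℂ := ((1/(n+1:ℝ) : ℂ)) with ht
    have htne : t ≠ 0 := by
      rw [ht]
      exact one_div_ne_zero (Complex.ofReal_ne_zero.mpr (by positivity))
    refine ⟨Matrix.diagonal (fun x => t ^ (α (p x))),
            Matrix.diagonal (fun y => t ^ (β (q y))),
            Matrix.diagonal (fun z => t ^ (γ (r z))), ?_, ?_, ?_, ?_⟩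
    · rw [Matrix.det_diagonal]
      exact isUnit_iff_ne_zero.mpr (Finset.prod_ne_zero_iff.mpr fun x _ => zpow_ne_zero _ htne)
    · rw [Matrix.det_diagonal]
      exact isUnit_iff_ne_zero.mpr (Finset.prod_ne_zero_iff.mpr fun x _ => zpow_ne_zero _ htne)
    · rw [Matrix.det_diagonal]
      exact isUnit_iff_ne_zero.mpr (Finset.prod_ne_zero_iff.mpr fun x _ => zpow_ne_zero _ htne)
    · funext xyz
      simp only [Matrix.diagonal_apply, ite_mul, zero_mul, mul_ite, mul_zero,
        Finset.sum_ite_eq, Finset.mem_univ, if_true]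
      rw [← zpow_add₀ htne, ← zpow_add₀ htne]
  have htend : Filter.Tendsto (fun n : ℕ => (fun xyz : a × b × c =>
      ((1/(n+1:ℝ) : ℂ)) ^ (α (p xyz.1) + β (q xyz.2.1) + γ (r xyz.2.2)) * T xyz))
      Filter.atTop (nhds (fun xyz : a × b × c =>
        if (p xyz.1, q xyz.2.1, r xyz.2.2) ∈ Ψ then T xyz else 0)) := by
    rw [tendsto_pi_nhds]
    intro xyz
    by_cases hmem : (p xyz.1, q xyz.2.1, r xyz.2.2) ∈ Ψ
    · have he : α (p xyz.1) + β (q xyz.2.1) + γ (r xyz.2.2) = 0 := hzero _ hmem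
      simp [he, hmem]
    · simp only [hmem, if_false]
      by_cases hT : T xyz = 0
      · simp [hT]
      · have he : 0 < α (p xyz.1) + β (q xyz.2.1) + γ (r xyz.2.2) :=
          hpos _ ⟨xyz.1, xyz.2.1, xyz.2.2, rfl, rfl, rfl, by simpa using hT⟩ hmem
        set e := α (p xyz.1) + β (q xyz.2.1) + γ (r xyz.2.2) with hedef
        have hm : e = (e.toNat : ℤ) := (Int.toNat_of_nonneg he.le).symm
        have h0 : Filter.Tendsto (fun n : ℕ => ((1/(n+1:ℝ)) : ℂ)) Filter.atTop (nhds 0) := by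
          have h1 := tendsto_one_div_add_atTop_nhds_zero_nat (𝕜 := ℝ)
          have h2 := (Complex.continuous_ofReal.tendsto 0).comp h1
          simpa [Function.comp_def, Complex.ofReal_div] using h2
        have hlim : Filter.Tendsto (fun n : ℕ => ((1/(n+1:ℝ)) : ℂ) ^ e.toNat * T xyz)
            Filter.atTop (nhds 0) := by
          have h3 := ((h0.pow e.toNat).mul_const (T xyz))
          simpa [zero_pow (by omega : e.toNat ≠ 0)] using h3
        convert hlim using 2 with n
        rw [hm, zpow_natCast, Int.toNat_natCast]
  exact mem_closure_of_tendsto htend (Filter.Eventually.of_forall key)
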